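/- arXiv:1210.1301 — 8 statements merged into one kernel-verified Lean document; each statement's English description precedes it below -/
import Mathlib

section
/- (Theorem 1, consistency of the regularized exact penalty problem.) Let F : ℝ^n → ℝ be continuous, G an m×n real matrix, g ∈ ℝ^m, and β > 0. Let (ε_k) be a sequence of positive reals with ε_k → 0, and for each k let x_k be a global minimizer of J_{ε_k}(x) = F(x) + β ψ_{ε_k}(Gx − g) over ℝ^n. If x_k converges to a point x̄ ∈ ℝ^n, then x̄ is a global minimizer of J(x) = F(x) + β ψ(Gx − g) over ℝ^n. -/
open Matrix

/-- The regularization `φ_ε` of `s ↦ max 0 s`. -/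
noncomputable def phiEps (ε s : ℝ) : ℝ :=
  if s ≤ 0 then ε / 2 else if s ≤ ε then s ^ 2 / (2 * ε) + ε / 2 else s

/-- `ψ(y) = Σ_i max(0, y_i)`. -/
noncomputable def psi {m : ℕ} (y : Fin m → ℝ) : ℝ := ∑ i, max 0 (y i)

/-- `ψ_ε(y) = Σ_i φ_ε(y_i)`. -/
noncomputable def psiEps (ε : ℝ) {m : ℕ} (y : Fin m → ℝ) : ℝ := ∑ i, phiEps ε (y i)

lemma max_le_phiEps {ε : ℝ} (hε : 0 < ε) (s : ℝ) : max 0 s ≤ phiEps ε s := by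
  unfold phiEps
  split_ifs with h1 h2
  · simp [h1]; positivity
  · push_neg at h1
    rw [max_eq_right h1.le]
    rw [← sub_nonneg]
    have heq : s ^ 2 / (2 * ε) + ε / 2 - s = (s - ε) ^ 2 / (2 * ε) := by
      field_simp; ring
    rw [heq]; positivity
  · push_neg at h1
    rw [max_eq_right h1.le]

lemma phiEps_le_max {ε : ℝ} (hε : 0 < ε) (s : ℝ) : phiEps ε s ≤ max 0 s + ε / 2 := by
  unfold phiEps
  split_ifs with h1 h2
  · simp [le_max_left]
  · push_neg at h1
    rw [max_eq_right h1.le]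
    have : s ^ 2 ≤ s * ε := by nlinarith
    have : s ^ 2 / (2 * ε) ≤ s / 2 := by
      rw [div_le_div_iff₀ (by positivity) (by norm_num)]; nlinarith
    linarith
  · push_neg at h1
    rw [max_eq_right h1.le]; linarith

lemma psi_le_psiEps {m : ℕ} {ε : ℝ} (hε : 0 < ε) (y : Fin m → ℝ) :
    psi y ≤ psiEps ε y :=
  Finset.sum_le_sum fun i _ => max_le_phiEps hε (y i)

lemma psiEps_le_psi {m : ℕ} {ε : ℝ} (hε : 0 < ε) (y : Fin m → ℝ) :
    psiEps ε y ≤ psi y + m * (ε / 2) := by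
  have := Finset.sum_le_sum fun i (_ : i ∈ Finset.univ) => phiEps_le_max hε (y i)
  simpa [psiEps, psi, Finset.sum_add_distrib, mul_comm] using this

lemma continuous_psi {m : ℕ} : Continuous (psi (m := m)) :=
  continuous_finset_sum _ fun i _ => continuous_const.max (continuous_apply i)

lemma continuous_mulVec {n m : ℕ} (G : Matrix (Fin m) (Fin n) ℝ) :
    Continuous fun x : Fin n → ℝ => G.mulVec x := by
  refine continuous_pi fun i => ?_
  simp only [Matrix.mulVec, dotProduct]
  exact continuous_finset_sum _ fun j _ => continuous_const.mul (continuous_apply j)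

/-- Theorem 1: consistency of the regularized exact penalty problem. -/
theorem stmt3 {n m : ℕ} (F : (Fin n → ℝ) → ℝ) (hF : Continuous F)
    (G : Matrix (Fin m) (Fin n) ℝ) (g : Fin m → ℝ) (β : ℝ) (hβ : 0 < β)
    (ε : ℕ → ℝ) (hεpos : ∀ k, 0 < ε k)
    (hε0 : Filter.Tendsto ε Filter.atTop (nhds 0))
    (x : ℕ → Fin n → ℝ)
    (hmin : ∀ k, ∀ y : Fin n → ℝ,
      F (x k) + β * psiEps (ε k) (G.mulVec (x k) - g)
        ≤ F y + β * psiEps (ε k) (G.mulVec y - g))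
    (xbar : Fin n → ℝ)
    (hconv : Filter.Tendsto x Filter.atTop (nhds xbar)) :
    ∀ y : Fin n → ℝ,
      F xbar + β * psi (G.mulVec xbar - g) ≤ F y + β * psi (G.mulVec y - g) := by
  intro y
  set J : (Fin n → ℝ) → ℝ := fun z => F z + β * psi (G.mulVec z - g) with hJ
  have hJcont : Continuous J :=
    hF.add (continuous_const.mul (continuous_psi.comp ((continuous_mulVec G).sub continuous_const)))
  have key : ∀ k, J (x k) ≤ J y + β * (m * (ε k / 2)) := by
    intro k
    have h1 : J (x k) ≤ F (x k) + β * psiEps (ε k) (G.mulVec (x k) - g) := by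
      have := psi_le_psiEps (hεpos k) (G.mulVec (x k) - g)
      simp only [hJ]
      nlinarith
    have h2 : F y + β * psiEps (ε k) (G.mulVec y - g) ≤ J y + β * (m * (ε k / 2)) := by
      have := psiEps_le_psi (hεpos k) (G.mulVec y - g)
      simp only [hJ]
      nlinarith
    exact h1.trans ((hmin k y).trans h2)
  have hlim1 : Filter.Tendsto (fun k => J (x k)) Filter.atTop (nhds (J xbar)) :=
    (hJcont.tendsto xbar).comp hconv
  have hlim2 : Filter.Tendsto (fun k => J y + β * (m * (ε k / 2))) Filter.atTop
      (nhds (J y)) := by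
    have : Filter.Tendsto (fun k => β * (m * (ε k / 2))) Filter.atTop (nhds 0) := by
      have := (hε0.div_const 2).const_mul (m : ℝ) |>.const_mul β
      simpa using this
    simpa using (tendsto_const_nhds.add this)
  exact le_of_tendsto_of_tendsto' hlim1 hlim2 key
end

section
/- For every ε > 0, the function s ↦ φ_ε(√s) is concave on the interval [0, ∞). -/
lemma phiEps_sqrt_le (ε : ℝ) (hε : 0 < ε) (s t : ℝ) (hs : 0 ≤ s) (ht : ε ≤ t) :
    phiEps ε (Real.sqrt s) ≤ s / (2 * t) + t / 2 := by
  have ht0 : 0 < t := lt_of_lt_of_le hε ht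
  have hsq : Real.sqrt s ^ 2 = s := Real.sq_sqrt hs
  have hsn : 0 ≤ Real.sqrt s := Real.sqrt_nonneg s
  unfold phiEps
  rw [hsq]
  by_cases h1 : Real.sqrt s ≤ ε
  · have hsle : s ≤ ε * t := by nlinarith
    have key : s / (2 * ε) + ε / 2 ≤ s / (2 * t) + t / 2 := by
      have heq : s / (2 * t) + t / 2 - (s / (2 * ε) + ε / 2)
          = (t - ε) * (ε * t - s) / (2 * ε * t) := by
        field_simp
        ring
      have hnum : 0 ≤ (t - ε) * (ε * t - s) / (2 * ε * t) := by
        apply div_nonneg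
        · nlinarith
        · positivity
      linarith
    have hε2 : ε / 2 ≤ s / (2 * ε) + ε / 2 := by
      have : 0 ≤ s / (2 * ε) := by positivity
      linarith
    split_ifs <;> linarith
  · push_neg at h1
    have h0 : ¬ Real.sqrt s ≤ 0 := by linarith
    rw [if_neg h0, if_neg (not_le.mpr h1)]
    rw [div_add_div _ _ (by positivity) (by norm_num), le_div_iff₀ (by positivity)]
    nlinarith [sq_nonneg (Real.sqrt s - t)]

lemma phiEps_sqrt_eq (ε : ℝ) (hε : 0 < ε) (s : ℝ) (hs : 0 ≤ s) :
    phiEps ε (Real.sqrt s)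
      = s / (2 * max ε (Real.sqrt s)) + (max ε (Real.sqrt s)) / 2 := by
  have hsq : Real.sqrt s ^ 2 = s := Real.sq_sqrt hs
  have hsn : 0 ≤ Real.sqrt s := Real.sqrt_nonneg s
  unfold phiEps
  by_cases h1 : Real.sqrt s ≤ ε
  · rw [max_eq_left h1]
    by_cases h0 : Real.sqrt s ≤ 0
    · have hs0 : Real.sqrt s = 0 := le_antisymm h0 hsn
      have : s = 0 := by nlinarith
      rw [if_pos h0, this]
      rw [zero_div, zero_add]
    · rw [if_neg h0, if_pos h1, hsq]
  · push_neg at h1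
    have h0 : ¬ Real.sqrt s ≤ 0 := by linarith
    have hpos : 0 < Real.sqrt s := lt_trans hε h1
    rw [max_eq_right (le_of_lt h1), if_neg h0, if_neg (not_le.mpr h1)]
    field_simp
    nlinarith

theorem stmt5 (ε : ℝ) (hε : 0 < ε) :
    ConcaveOn ℝ (Set.Ici (0 : ℝ)) (fun s => phiEps ε (Real.sqrt s)) := by
  refine ⟨convex_Ici 0, ?_⟩
  intro x hx y hy a b ha hb hab
  simp only [smul_eq_mul]
  have hx0 : (0:ℝ) ≤ x := hx
  have hy0 : (0:ℝ) ≤ y := hy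
  have hxy : 0 ≤ a * x + b * y := add_nonneg (mul_nonneg ha hx0) (mul_nonneg hb hy0)
  set t := max ε (Real.sqrt (a * x + b * y)) with htdef
  have ht : ε ≤ t := le_max_left _ _
  have ht0 : 0 < t := lt_of_lt_of_le hε ht
  have h1 := phiEps_sqrt_le ε hε x t hx0 ht
  have h2 := phiEps_sqrt_le ε hε y t hy0 ht
  have heq := phiEps_sqrt_eq ε hε (a * x + b * y) hxy
  rw [heq]
  have hL : (a * x + b * y) / (2 * t) + t / 2
      = a * (x / (2 * t) + t / 2) + b * (y / (2 * t) + t / 2) := by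
    field_simp
    linear_combination (-t ^ 2) * hab
  rw [← htdef, hL]
  have := mul_le_mul_of_nonneg_left h1 ha
  have := mul_le_mul_of_nonneg_left h2 hb
  linarith
end

section
/- Let ε > 0, b ≥ 0 and a ∈ ℝ. Then φ_ε(a) − φ_ε(b) ≤ (a² − b²)/(2·max(ε, b)). (This is the tangent-line inequality obtained from the concavity of s ↦ φ_ε(√s) on [0,∞), together with φ_ε(a) ≤ φ_ε(|a|).) -/
lemma phiEps_le_tangent (ε a m : ℝ) (hε : 0 < ε) (hεm : ε ≤ m) :
    phiEps ε a ≤ a ^ 2 / (2 * m) + m / 2 := by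
  have hm : 0 < m := hε.trans_le hεm
  unfold phiEps
  split_ifs with h1 h2
  · have : (0:ℝ) ≤ a ^ 2 / (2 * m) := by positivity
    linarith
  · have e1 : a ^ 2 / (2 * ε) + ε / 2 = (a ^ 2 + ε ^ 2) / (2 * ε) := by
      field_simp
    have e2 : a ^ 2 / (2 * m) + m / 2 = (a ^ 2 + m ^ 2) / (2 * m) := by
      field_simp
    rw [e1, e2, div_le_div_iff₀ (by positivity) (by positivity)]
    have ha2 : a ^ 2 ≤ ε * m := by nlinarith
    nlinarith [mul_nonneg (sub_nonneg.2 hεm) (sub_nonneg.2 ha2)]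
  · rw [div_add_div _ _ (by positivity : (2 * m : ℝ) ≠ 0) (by norm_num : (2:ℝ) ≠ 0),
      le_div_iff₀ (by positivity)]
    nlinarith [sq_nonneg (a - m)]

/-- Tangent-line inequality from concavity of `s ↦ φ_ε(√s)` on `[0, ∞)`. -/
theorem stmt6 (ε a b : ℝ) (hε : 0 < ε) (hb : 0 ≤ b) :
    phiEps ε a - phiEps ε b ≤ (a ^ 2 - b ^ 2) / (2 * max ε b) := by
  set m := max ε b with hm
  have hεm : ε ≤ m := le_max_left _ _
  have hbm : b ≤ m := le_max_right _ _
  have hm0 : 0 < m := hε.trans_le hεm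
  have hbval : phiEps ε b = b ^ 2 / (2 * m) + m / 2 := by
    rcases le_or_gt b ε with h | h
    · have hmε : m = ε := max_eq_left h
      unfold phiEps
      rw [hmε]
      split_ifs with h1
      · have : b = 0 := le_antisymm h1 hb
        rw [this]; norm_num
      · rfl
    · have hmb : m = b := max_eq_right h.le
      unfold phiEps
      rw [if_neg (by linarith), if_neg (by linarith), hmb]
      have hb0 : b ≠ 0 := by linarith
      field_simp
      ring
  have ha := phiEps_le_tangent ε a m hε hεm
  have : (a ^ 2 - b ^ 2) / (2 * m) = (a ^ 2 / (2 * m) + m / 2) - (b ^ 2 / (2 * m) + m / 2) := by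
    field_simp
    ring
  rw [this, hbval]
  linarith
end

section
/- (Key inequality in the proof of Theorem 3.) Let ε > 0, m ∈ ℕ, and a, b ∈ ℝ^m. Assume that for every index i with b_i < 0 one has a_i ≤ 0. Let A = { j : b_j ≥ 0 } and for j ∈ A set X_{jj} = 1/max(ε, b_j). Then (1/2) Σ_{j ∈ A} X_{jj} (a_j² − b_j²) ≥ ψ_ε(a) − ψ_ε(b), where ψ_ε(y) = Σ_{i=1}^m φ_ε(y_i). -/
lemma phiEps_le (ε t s : ℝ) (hε : 0 < ε) (ht : ε ≤ t) :
    phiEps ε s ≤ s ^ 2 / (2 * t) + t / 2 := by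
  have ht0 : 0 < t := lt_of_lt_of_le hε ht
  unfold phiEps
  split_ifs with h1 h2
  · have : 0 ≤ s ^ 2 / (2 * t) := by positivity
    linarith
  · have hs0 : 0 < s := lt_of_not_ge h1
    have key : s ^ 2 / (2 * t) + t / 2 - (s ^ 2 / (2 * ε) + ε / 2)
        = (t - ε) * (ε * t - s ^ 2) / (2 * ε * t) := by
      field_simp
      try ring
    have hnum : 0 ≤ (t - ε) * (ε * t - s ^ 2) := by
      apply mul_nonneg (by linarith)
      nlinarith
    nlinarith [div_nonneg hnum (by positivity : (0:ℝ) ≤ 2 * ε * t)]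
  · have hs : ε < s := lt_of_not_ge h2
    have key : s ^ 2 / (2 * t) + t / 2 - s = (s - t) ^ 2 / (2 * t) := by
      field_simp
      try ring
    nlinarith [div_nonneg (sq_nonneg (s - t)) (by positivity : (0:ℝ) ≤ 2 * t)]

lemma phiEps_eq (ε b : ℝ) (hε : 0 < ε) (hb : 0 ≤ b) :
    phiEps ε b = b ^ 2 / (2 * max ε b) + max ε b / 2 := by
  unfold phiEps
  rcases le_total b ε with hbe | hbe
  · rw [max_eq_left hbe]
    by_cases h1 : b ≤ 0
    · have hb0 : b = 0 := le_antisymm h1 hb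
      rw [if_pos h1, hb0]
      norm_num
    · rw [if_neg h1, if_pos hbe]
  · have hb0 : 0 < b := lt_of_lt_of_le hε hbe
    rw [max_eq_right hbe]
    rw [if_neg (by linarith)]
    by_cases h2 : b ≤ ε
    · have hbε : b = ε := le_antisymm h2 hbe
      rw [if_pos h2, hbε]
    · rw [if_neg h2]
      field_simp
      ring

/-- Key inequality in the proof of Theorem 3. -/
theorem stmt9 (ε : ℝ) (hε : 0 < ε) (m : ℕ) (a b : Fin m → ℝ)
    (h : ∀ i, b i < 0 → a i ≤ 0) :
    (1 / 2) * ∑ j ∈ Finset.univ.filter (fun j => 0 ≤ b j),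
        (1 / max ε (b j)) * ((a j) ^ 2 - (b j) ^ 2)
      ≥ psiEps ε a - psiEps ε b := by
  unfold psiEps
  rw [Finset.mul_sum, Finset.sum_filter, ← Finset.sum_sub_distrib]
  apply Finset.sum_le_sum
  intro i _
  by_cases hb : 0 ≤ b i
  · simp only [hb, if_true]
    have ht : ε ≤ max ε (b i) := le_max_left _ _
    have ht0 : 0 < max ε (b i) := lt_of_lt_of_le hε ht
    have h1 := phiEps_le ε (max ε (b i)) (a i) hε ht
    have h2 := phiEps_eq ε (b i) hε hb
    have : phiEps ε (a i) - phiEps ε (b i)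
        ≤ (a i) ^ 2 / (2 * max ε (b i)) - (b i) ^ 2 / (2 * max ε (b i)) := by
      rw [h2]; linarith
    calc phiEps ε (a i) - phiEps ε (b i)
        ≤ (a i) ^ 2 / (2 * max ε (b i)) - (b i) ^ 2 / (2 * max ε (b i)) := this
      _ = 1 / 2 * (1 / max ε (b i) * ((a i) ^ 2 - (b i) ^ 2)) := by
          field_simp
  · simp only [hb, if_false]
    have hbi : b i < 0 := lt_of_not_ge hb
    have hai : a i ≤ 0 := h i hbi
    have e1 : phiEps ε (a i) = ε / 2 := by unfold phiEps; simp [hai]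
    have e2 : phiEps ε (b i) = ε / 2 := by unfold phiEps; simp [le_of_lt hbi]
    rw [e1, e2]; simp
end

section
/- (Theorem 3, descent property of Algorithm 1, one-step version.) Let F : ℝ^n → ℝ be differentiable, G an m×n real matrix, g ∈ ℝ^m, α > 0, β > 0, ε > 0, ω > 0, and P an n×n real matrix. Let x, x⁺ ∈ ℝ^n, d = x⁺ − x, A = { j : (Gx − g)_j ≥ 0 }, and let X be the diagonal m×m matrix with X_{jj} = 1/max(ε, (Gx − g)_j) for j ∈ A and X_{jj} = 0 otherwise. Assume: (i) x⁺ satisfies α P d + ∇F(x) + β Gᵗ X (G x⁺ − g) = 0; (ii) α⟨P d, d⟩ − (F(x⁺) − F(x) − ⟨∇F(x), d⟩) ≥ ω‖d‖²; (iii) for every i with (Gx − g)_i < 0 one has (G x⁺ − g)_i ≤ 0. Then ω‖x⁺ − x‖² + J_ε(x⁺) ≤ J_ε(x), where J_ε(x) = F(x) + β ψ_ε(Gx − g). In particular J_ε decreases strictly along the iteration whenever x⁺ ≠ x. -/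
open Matrix

lemma phi_le_Q (ε : ℝ) (hε : 0 < ε) (c v : ℝ) (hc : ε ≤ c) :
    phiEps ε v ≤ v ^ 2 / (2 * c) + c / 2 := by
  have hc0 : 0 < c := lt_of_lt_of_le hε hc
  unfold phiEps
  split_ifs with h1 h2
  · have : 0 ≤ v ^ 2 / (2 * c) := by positivity
    linarith
  · have key : v ^ 2 / (2 * c) + c / 2 - (v ^ 2 / (2 * ε) + ε / 2)
        = (c - ε) * (ε * c - v ^ 2) / (2 * ε * c) := by
      field_simp
      ring
    have h3 : 0 ≤ (c - ε) * (ε * c - v ^ 2) / (2 * ε * c) := by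
      apply div_nonneg _ (by positivity)
      apply mul_nonneg (by linarith)
      nlinarith
    linarith
  · have key : v ^ 2 / (2 * c) + c / 2 - v = (v - c) ^ 2 / (2 * c) := by
      field_simp
      ring
    have h3 : 0 ≤ (v - c) ^ 2 / (2 * c) := by positivity
    linarith

lemma phi_eq_Q (ε : ℝ) (hε : 0 < ε) (u : ℝ) (hu : 0 ≤ u) :
    phiEps ε u = u ^ 2 / (2 * max ε u) + max ε u / 2 := by
  unfold phiEps
  rcases le_or_gt u ε with h | h
  · rw [max_eq_left h]
    split_ifs with h1
    · have : u = 0 := le_antisymm h1 hu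
      simp [this]
    · rfl
  · rw [max_eq_right h.le]
    have hu0 : u ≠ 0 := by linarith
    split_ifs with h1 h2
    · linarith
    · linarith
    · field_simp
      ring

lemma phi_key (ε : ℝ) (hε : 0 < ε) (u v : ℝ) (hu : 0 ≤ u) :
    phiEps ε v - phiEps ε u ≤ (1 / max ε u) * v * (v - u) := by
  have hc : ε ≤ max ε u := le_max_left _ _
  have hc0 : 0 < max ε u := lt_of_lt_of_le hε hc
  have h1 := phi_le_Q ε hε (max ε u) v hc
  have h2 := phi_eq_Q ε hε u hu
  set c := max ε u
  have hcne : c ≠ 0 := ne_of_gt hc0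
  have key : (1 / c) * v * (v - u) - (v ^ 2 / (2 * c) - u ^ 2 / (2 * c))
      = (v - u) ^ 2 / (2 * c) := by
    field_simp
    ring
  have h3 : 0 ≤ (v - u) ^ 2 / (2 * c) := by positivity
  linarith

/-- Theorem 3: one-step descent property of Algorithm 1.  Here `d ⬝ᵥ d = ‖d‖²`
is the squared Euclidean norm. -/
theorem stmt10 {n m : ℕ} (F : (Fin n → ℝ) → ℝ) (hF : Differentiable ℝ F)
    (G : Matrix (Fin m) (Fin n) ℝ) (g : Fin m → ℝ)
    (α β ε ω : ℝ) (hα : 0 < α) (hβ : 0 < β) (hε : 0 < ε) (hω : 0 < ω)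
    (P : Matrix (Fin n) (Fin n) ℝ)
    (x xp d : Fin n → ℝ) (hd : d = xp - x)
    (Fx' : Fin n → ℝ) (hgrad : ∀ v : Fin n → ℝ, fderiv ℝ F x v = Fx' ⬝ᵥ v)
    (X : Matrix (Fin m) (Fin m) ℝ)
    (hX : X = Matrix.diagonal fun j =>
      if 0 ≤ (G.mulVec x - g) j then 1 / max ε ((G.mulVec x - g) j) else 0)
    (hupdate : α • P.mulVec d + Fx' + β • Gᵀ.mulVec (X.mulVec (G.mulVec xp - g)) = 0)
    (hR : α * (P.mulVec d ⬝ᵥ d) - (F xp - F x - Fx' ⬝ᵥ d) ≥ ω * (d ⬝ᵥ d))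
    (hI : ∀ i, (G.mulVec x - g) i < 0 → (G.mulVec xp - g) i ≤ 0) :
    ω * (d ⬝ᵥ d) + (F xp + β * psiEps ε (G.mulVec xp - g))
        ≤ F x + β * psiEps ε (G.mulVec x - g) ∧
    (xp ≠ x →
      F xp + β * psiEps ε (G.mulVec xp - g) < F x + β * psiEps ε (G.mulVec x - g)) := by
  set u : Fin m → ℝ := G.mulVec x - g with hu
  set v : Fin m → ℝ := G.mulVec xp - g with hv
  set w : Fin m → ℝ := fun j => if 0 ≤ u j then 1 / max ε (u j) else 0 with hw
  -- G d = v - u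
  have hGd : G.mulVec d = v - u := by
    rw [hd, Matrix.mulVec_sub]
    simp [hu, hv]
  -- dot the update equation with d
  have h0 : α * (P.mulVec d ⬝ᵥ d) + Fx' ⬝ᵥ d
      + β * (Gᵀ.mulVec (X.mulVec v) ⬝ᵥ d) = 0 := by
    have := congrArg (fun z => z ⬝ᵥ d) hupdate
    simpa [add_dotProduct, smul_dotProduct, smul_eq_mul] using this
  -- transpose manipulation
  have htr : Gᵀ.mulVec (X.mulVec v) ⬝ᵥ d = X.mulVec v ⬝ᵥ G.mulVec d := by
    rw [Matrix.mulVec_transpose, ← Matrix.dotProduct_mulVec]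
  set E : ℝ := X.mulVec v ⬝ᵥ G.mulVec d with hE
  have hEsum : E = ∑ j, w j * v j * (v j - u j) := by
    rw [hE, hGd, dotProduct]
    apply Finset.sum_congr rfl
    intro j _
    rw [hX, Matrix.mulVec_diagonal]
    simp [hw]
  -- sum inequality
  have hsum : psiEps ε v - psiEps ε u ≤ E := by
    rw [hEsum, psiEps, psiEps, ← Finset.sum_sub_distrib]
    apply Finset.sum_le_sum
    intro j _
    by_cases hj : 0 ≤ u j
    · have := phi_key ε hε (u j) (v j) hj
      simpa [hw, hj] using this
    · push_neg at hj
      have hvj : v j ≤ 0 := hI j hj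
      simp only [hw]
      rw [if_neg (not_le.mpr hj)]
      unfold phiEps
      rw [if_pos hvj, if_pos hj.le]
      simp
  have hbE : β * (psiEps ε v - psiEps ε u) ≤ β * E :=
    mul_le_mul_of_nonneg_left hsum hβ.le
  rw [mul_sub] at hbE
  have h1 : ω * (d ⬝ᵥ d) + (F xp + β * psiEps ε v) ≤ F x + β * psiEps ε u := by
    rw [htr] at h0
    linarith
  refine ⟨h1, fun hne => ?_⟩
  have hdne : d ≠ 0 := by
    rw [hd]
    intro h
    exact hne (by rwa [sub_eq_zero] at h)
  have hdd0 : d ⬝ᵥ d ≠ 0 := fun h => hdne (dotProduct_self_eq_zero.mp h)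
  have hddpos : 0 < d ⬝ᵥ d := by
    rcases (Finset.sum_nonneg fun i _ => mul_self_nonneg (d i)).lt_or_eq with h | h
    · exact h
    · exact absurd h.symm hdd0
  nlinarith
end

section
/- (Theorem 3, summability of the step lengths.) Let F : ℝ^n → ℝ be differentiable, G an m×n real matrix, g ∈ ℝ^m, α, β, ε, ω > 0, P an n×n real matrix, and suppose J_ε(x) = F(x) + β ψ_ε(Gx − g) is bounded below on ℝ^n. Let (x^k)_{k≥0} be a sequence in ℝ^n such that for every k ≥ k₀: (i) x^{k+1} satisfies α P (x^{k+1} − x^k) + ∇F(x^k) + β Gᵗ X_k (G x^{k+1} − g) = 0, where X_k is the diagonal matrix with [X_k]_{jj} = 1/max(ε, (Gx^k − g)_j) if (Gx^k − g)_j ≥ 0 and 0 otherwise; (ii) α⟨P(x^{k+1}−x^k), x^{k+1}−x^k⟩ − (F(x^{k+1}) − F(x^k) − ⟨∇F(x^k), x^{k+1}−x^k⟩) ≥ ω‖x^{k+1}−x^k‖²; (iii) (Gx^k − g)_i < 0 implies (Gx^{k+1} − g)_i ≤ 0 for every i. Then the sequence (J_ε(x^k))_{k≥k₀} is monotonically decreasing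 and Σ_{k≥k₀} ‖x^{k+1} − x^k‖² < ∞. -/
open Matrix

/-- Majorization: for `ε ≤ M`, `φ_ε(s) ≤ s²/(2M) + M/2`. -/
lemma phiEps_le_maj {ε M : ℝ} (hε : 0 < ε) (hM : ε ≤ M) (s : ℝ) :
    phiEps ε s ≤ s ^ 2 / (2 * M) + M / 2 := by
  have hM0 : 0 < M := lt_of_lt_of_le hε hM
  unfold phiEps
  split_ifs with h1 h2
  · have h := div_nonneg (sq_nonneg s) (by positivity : (0:ℝ) ≤ 2 * M)
    linarith
  · rw [div_add' _ _ _ (by positivity), div_add' _ _ _ (by positivity),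
      div_le_div_iff₀ (by positivity) (by positivity)]
    push_neg at h1
    have hs2 : s ^ 2 ≤ ε * M := by nlinarith
    nlinarith [mul_nonneg (sub_nonneg.2 hM) (sub_nonneg.2 hs2)]
  · push_neg at h1 h2
    rw [← sub_nonneg]
    have : s ^ 2 / (2 * M) + M / 2 - s = (s - M) ^ 2 / (2 * M) := by
      field_simp; ring
    rw [this]; positivity

lemma phiEps_eq_maj {ε a : ℝ} (hε : 0 < ε) (ha : 0 ≤ a) :
    phiEps ε a = a ^ 2 / (2 * max ε a) + max ε a / 2 := by
  unfold phiEps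
  rcases le_or_gt a ε with h | h
  · rw [max_eq_left h]
    split_ifs with h1
    · have ha0 : a = 0 := le_antisymm h1 ha
      subst ha0
      simp
    · rfl
  · rw [max_eq_right h.le]
    split_ifs with h1 h2
    · linarith
    · linarith
    · have ha0 : a ≠ 0 := ne_of_gt (hε.trans h)
      field_simp
      ring

/-- Key scalar inequality. -/
lemma phiEps_key {ε a b : ℝ} (hε : 0 < ε) (ha : 0 ≤ a) :
    phiEps ε b - phiEps ε a ≤ 1 / max ε a * b * (b - a) := by
  set M := max ε a with hMdef
  have hM : ε ≤ M := le_max_left _ _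
  have hM0 : 0 < M := lt_of_lt_of_le hε hM
  have h1 := phiEps_le_maj hε hM b
  have h2 := phiEps_eq_maj hε ha
  have h3 : b ^ 2 / (2 * M) - a ^ 2 / (2 * M) ≤ 1 / M * b * (b - a) := by
    rw [div_sub_div_same, div_le_iff₀ (by positivity)]
    have he : 1 / M * b * (b - a) * (2 * M) = 2 * (b * (b - a)) := by
      field_simp
    nlinarith [sq_nonneg (b - a)]
  linarith

/-- Theorem 3: monotone decrease of `J_ε` and summability of the squared step
lengths.  Here `v ⬝ᵥ v = ‖v‖²` is the squared Euclidean norm. -/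
theorem stmt11 {n m : ℕ} (F : (Fin n → ℝ) → ℝ) (hF : Differentiable ℝ F)
    (G : Matrix (Fin m) (Fin n) ℝ) (g : Fin m → ℝ)
    (α β ε ω : ℝ) (hα : 0 < α) (hβ : 0 < β) (hε : 0 < ε) (hω : 0 < ω)
    (P : Matrix (Fin n) (Fin n) ℝ)
    (hbdd : ∃ C : ℝ, ∀ y : Fin n → ℝ, C ≤ F y + β * psiEps ε (G.mulVec y - g))
    (x : ℕ → Fin n → ℝ) (k₀ : ℕ)
    (Fgrad : (Fin n → ℝ) → (Fin n → ℝ))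
    (hgrad : ∀ y : Fin n → ℝ, ∀ v : Fin n → ℝ, fderiv ℝ F y v = Fgrad y ⬝ᵥ v)
    (hupdate : ∀ k, k₀ ≤ k →
      α • P.mulVec (x (k + 1) - x k) + Fgrad (x k) +
        β • Gᵀ.mulVec
          ((Matrix.diagonal fun j =>
              if 0 ≤ (G.mulVec (x k) - g) j then 1 / max ε ((G.mulVec (x k) - g) j)
              else 0).mulVec (G.mulVec (x (k + 1)) - g)) = 0)
    (hR : ∀ k, k₀ ≤ k →
      α * (P.mulVec (x (k + 1) - x k) ⬝ᵥ (x (k + 1) - x k)) -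
          (F (x (k + 1)) - F (x k) - Fgrad (x k) ⬝ᵥ (x (k + 1) - x k))
        ≥ ω * ((x (k + 1) - x k) ⬝ᵥ (x (k + 1) - x k)))
    (hI : ∀ k, k₀ ≤ k → ∀ i,
      (G.mulVec (x k) - g) i < 0 → (G.mulVec (x (k + 1)) - g) i ≤ 0) :
    (∀ k, k₀ ≤ k →
      F (x (k + 1)) + β * psiEps ε (G.mulVec (x (k + 1)) - g)
        ≤ F (x k) + β * psiEps ε (G.mulVec (x k) - g)) ∧
    Summable (fun k : ℕ => (x (k + 1) - x k) ⬝ᵥ (x (k + 1) - x k)) := by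
  set J : ℕ → ℝ := fun k => F (x k) + β * psiEps ε (G.mulVec (x k) - g) with hJ
  set s : ℕ → ℝ := fun k => (x (k + 1) - x k) ⬝ᵥ (x (k + 1) - x k) with hs
  have hs_nonneg : ∀ k, 0 ≤ s k := fun k =>
    Finset.sum_nonneg fun i _ => mul_self_nonneg _
  -- key one-step decrease
  have hstep : ∀ k, k₀ ≤ k → J (k + 1) + ω * s k ≤ J k := by
    intro k hk
    set d : Fin n → ℝ := x (k + 1) - x k with hd
    set a : Fin m → ℝ := G.mulVec (x k) - g with ha
    set b : Fin m → ℝ := G.mulVec (x (k + 1)) - g with hb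
    set X : Fin m → ℝ := fun j => if 0 ≤ a j then 1 / max ε (a j) else 0 with hX
    -- dot the update equation with d
    have hdot : α * (P.mulVec d ⬝ᵥ d) + Fgrad (x k) ⬝ᵥ d
        + β * ((fun j => X j * b j) ⬝ᵥ (G.mulVec d)) = 0 := by
      have h0 := congrArg (fun v => v ⬝ᵥ d) (hupdate k hk)
      simp only [add_dotProduct, smul_dotProduct, zero_dotProduct,
        smul_eq_mul] at h0
      rw [Matrix.mulVec_transpose, ← Matrix.dotProduct_mulVec] at h0
      have hdiag : (Matrix.diagonal X).mulVec b = fun j => X j * b j := by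
        funext j; exact Matrix.mulVec_diagonal X b j
      rw [hdiag] at h0
      exact h0
    have hGd : G.mulVec d = b - a := by
      rw [hd, Matrix.mulVec_sub, hb, ha]; abel
    -- componentwise inequality for psi
    have hpsi : psiEps ε b - psiEps ε a ≤ (fun j => X j * b j) ⬝ᵥ (G.mulVec d) := by
      rw [hGd]
      unfold psiEps dotProduct
      rw [← Finset.sum_sub_distrib]
      apply Finset.sum_le_sum
      intro i _
      simp only [Pi.sub_apply, hX]
      split_ifs with h
      · have := phiEps_key (a := a i) (b := b i) hε h
        calc phiEps ε (b i) - phiEps ε (a i) ≤ 1 / max ε (a i) * b i * (b i - a i) := this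
          _ = 1 / max ε (a i) * b i * (b i - a i) := rfl
      · push_neg at h
        have hbi : b i ≤ 0 := hI k hk i h
        have : phiEps ε (b i) = phiEps ε (a i) := by
          unfold phiEps; rw [if_pos hbi, if_pos h.le]
        rw [this]; ring_nf; simp
    have hRk := hR k hk
    -- combine
    have : β * (psiEps ε b - psiEps ε a) ≤ - α * (P.mulVec d ⬝ᵥ d) - Fgrad (x k) ⬝ᵥ d := by
      have := mul_le_mul_of_nonneg_left hpsi hβ.le
      nlinarith [this]
    simp only [hJ]
    have hF' : F (x (k+1)) - F (x k) ≤ α * (P.mulVec d ⬝ᵥ d) + Fgrad (x k) ⬝ᵥ d - ω * s k := by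
      have := hR k hk
      simp only [hs, ← hd] at *
      linarith
    rw [← ha, ← hb]
    nlinarith [this, hF']
  have hmono : ∀ k, k₀ ≤ k → J (k + 1) ≤ J k := by
    intro k hk
    have := hstep k hk
    nlinarith [hs_nonneg k, hω.le]
  refine ⟨hmono, ?_⟩
  obtain ⟨C, hC⟩ := hbdd
  have hJC : ∀ k, C ≤ J k := fun k => hC (x k)
  -- telescoping bound
  have htel : ∀ N : ℕ, ω * ∑ j ∈ Finset.range N, s (j + k₀) ≤ J k₀ - J (k₀ + N) := by
    intro N
    induction N with
    | zero => simp
    | succ N ih =>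
      rw [Finset.sum_range_succ, mul_add]
      have h2 := hstep (k₀ + N) (Nat.le_add_right _ _)
      have : k₀ + (N + 1) = (k₀ + N) + 1 := by ring
      rw [this]
      have hNk : N + k₀ = k₀ + N := by ring
      rw [hNk]
      linarith
  have hsum : Summable (fun j : ℕ => s (j + k₀)) := by
    apply summable_of_sum_range_le (c := (J k₀ - C) / ω) (fun j => hs_nonneg _)
    intro N
    rw [le_div_iff₀ hω]
    have := htel N
    have := hJC (k₀ + N)
    nlinarith
  exact (summable_nat_add_iff k₀).mp hsum
end

section
/- (Global convergence of Algorithm 1 on the scalar model problem, feasible case.) Let ε > 0, g < 0 and β > ε − g. Define Φ : ℝ → ℝ by Φ(x) = x − ( x + β·max(x−g, 0)/max(x−g, ε) ) / ( 1 + β·sgn(x−g)/max(x−g, ε) ), where sgn(s) = 1 if s ≥ 0 and sgn(s) = 0 if s < 0. Then for every initial point x⁰ ∈ ℝ, the iterates x^k = Φ^[k](x⁰) converge to x̄ = βg/(ε + β) as k → ∞. -/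
/-- `sgn(s) = 1` if `s ≥ 0`, `0` if `s < 0`. -/
noncomputable def sgn (s : ℝ) : ℝ := if 0 ≤ s then 1 else 0

/-- The explicit form of the implicit fixed point iteration (Algorithm 1) for the
scalar model problem `min x²/2 + β φ_ε(x − g)`. -/
noncomputable def PhiMap (ε g β x : ℝ) : ℝ :=
  x - (x + β * max (x - g) 0 / max (x - g) ε) / (1 + β * sgn (x - g) / max (x - g) ε)

section aux
variable {ε g β : ℝ}

lemma phi_mid (hε : 0 < ε) (hβ0 : 0 < β) {x : ℝ}
    (h1 : g ≤ x) (h2 : x - g ≤ ε) : PhiMap ε g β x = β * g / (ε + β) := by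
  have hεβ : (0:ℝ) < ε + β := by linarith
  unfold PhiMap sgn
  rw [if_pos (by linarith : (0:ℝ) ≤ x - g), max_eq_left (by linarith : (0:ℝ) ≤ x - g),
    max_eq_right h2]
  have hne : 1 + β * 1 / ε ≠ 0 := by positivity
  field_simp
  ring

lemma phi_right (hε : 0 < ε) (hβ0 : 0 < β) {x : ℝ}
    (h : ε ≤ x - g) : PhiMap ε g β x = β * g / (x - g + β) := by
  have h0 : (0:ℝ) < x - g := lt_of_lt_of_le hε h
  have hpos : (0:ℝ) < x - g + β := by linarith
  unfold PhiMap sgn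
  rw [if_pos h0.le, max_eq_left h0.le, max_eq_left h]
  have hne : 1 + β * 1 / (x - g) ≠ 0 := by positivity
  field_simp
  ring

lemma phi_left {x : ℝ} (h : x < g) : PhiMap ε g β x = 0 := by
  unfold PhiMap sgn
  rw [if_neg (by linarith : ¬ (0:ℝ) ≤ x - g), max_eq_right (by linarith : x - g ≤ 0)]
  simp

end aux

/-- Global convergence of Algorithm 1 on the scalar model problem (feasible case). -/
theorem stmt14 (ε g β : ℝ) (hε : 0 < ε) (hg : g < 0) (hβ : ε - g < β) :
    ∀ x0 : ℝ,
      Filter.Tendsto (fun k : ℕ => (PhiMap ε g β)^[k] x0) Filter.atTop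
        (nhds (β * g / (ε + β))) := by
  have hβ0 : (0:ℝ) < β := by linarith
  have hεβ : (0:ℝ) < ε + β := by linarith
  set Φ := PhiMap ε g β with hΦ
  set xbar := β * g / (ε + β) with hxbar
  set q := -g / (ε + β) with hq
  have hq0 : 0 ≤ q := div_nonneg (by linarith) hεβ.le
  have hq1 : q < 1 := by
    rw [hq, div_lt_one hεβ]; linarith
  have hxbar1 : g ≤ xbar := by
    rw [hxbar, le_div_iff₀ hεβ]; nlinarith
  have hxbar2 : xbar - g ≤ ε := by
    rw [hxbar, sub_le_iff_le_add, div_le_iff₀ hεβ]; nlinarith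
  -- fixed point
  have hfix : Φ xbar = xbar := phi_mid hε hβ0 hxbar1 hxbar2
  -- contraction step in the right region
  have step : ∀ y : ℝ, ε ≤ y - g → g ≤ Φ y ∧ Φ y - g ≤ q * (y - g) := by
    intro y hy
    have h0 : (0:ℝ) < y - g := lt_of_lt_of_le hε hy
    have hpos : (0:ℝ) < y - g + β := by linarith
    rw [hΦ, phi_right hε hβ0 hy]
    constructor
    · rw [le_div_iff₀ hpos]; nlinarith
    · rw [sub_le_iff_le_add, div_le_iff₀ hpos]
      have hqe : q * (ε + β) = -g := by rw [hq]; field_simp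
      have h2 : (y - g) * (q * (ε + β)) = (y - g) * (-g) := by rw [hqe]
      nlinarith [mul_nonneg (mul_nonneg hq0 h0.le) (show (0:ℝ) ≤ y - g - ε by linarith)]
  -- main claim for g ≤ x
  have key : ∀ x : ℝ, g ≤ x → ∃ N, ∀ m ≥ N, Φ^[m] x = xbar := by
    intro x hx
    have inv : ∀ k : ℕ, g ≤ Φ^[k] x ∧ (Φ^[k] x - g ≤ ε ∨ Φ^[k] x - g ≤ q ^ k * (x - g)) := by
      intro k
      induction k with
      | zero => exact ⟨hx, Or.inr (by simp)⟩
      | succ k ih =>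
        obtain ⟨ihg, ihc⟩ := ih
        by_cases hcase : Φ^[k] x - g ≤ ε
        · have : Φ^[k+1] x = xbar := by
            rw [Function.iterate_succ_apply', hΦ, phi_mid hε hβ0 ihg hcase]
          rw [this]
          exact ⟨hxbar1, Or.inl hxbar2⟩
        · push_neg at hcase
          have hy : ε ≤ Φ^[k] x - g := hcase.le
          obtain ⟨s1, s2⟩ := step _ hy
          rw [Function.iterate_succ_apply']
          refine ⟨s1, Or.inr ?_⟩
          have hb : Φ^[k] x - g ≤ q ^ k * (x - g) := by
            rcases ihc with h | h
            · linarith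
            · exact h
          calc Φ (Φ^[k] x) - g ≤ q * (Φ^[k] x - g) := s2
            _ ≤ q * (q ^ k * (x - g)) := mul_le_mul_of_nonneg_left hb hq0
            _ = q ^ (k+1) * (x - g) := by ring
    have htend : Filter.Tendsto (fun n : ℕ => q ^ n * (x - g)) Filter.atTop (nhds 0) := by
      have := (tendsto_pow_atTop_nhds_zero_of_lt_one hq0 hq1).mul_const (x - g)
      simpa using this
    obtain ⟨N, hN⟩ := (htend.eventually_lt_const hε).exists
    obtain ⟨hNg, hNc⟩ := inv N
    have hNε : Φ^[N] x - g ≤ ε := by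
      rcases hNc with h | h
      · exact h
      · linarith
    refine ⟨N + 1, ?_⟩
    have base : Φ^[N+1] x = xbar := by
      rw [Function.iterate_succ_apply', hΦ, phi_mid hε hβ0 hNg hNε]
    have all : ∀ j : ℕ, Φ^[N+1+j] x = xbar := by
      intro j
      induction j with
      | zero => simpa using base
      | succ j ihj =>
        rw [show N+1+(j+1) = (N+1+j)+1 by omega, Function.iterate_succ_apply', ihj, hfix]
    intro m hm
    have : m = N + 1 + (m - (N+1)) := by omega
    rw [this]; exact all _
  intro x0
  by_cases hx0 : g ≤ x0
  · obtain ⟨N, hN⟩ := key x0 hx0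
    exact tendsto_atTop_of_eventually_const hN
  · push_neg at hx0
    have h1 : Φ x0 = 0 := phi_left hx0
    obtain ⟨N, hN⟩ := key 0 hg.le
    apply tendsto_atTop_of_eventually_const (i₀ := N + 1)
    intro m hm
    obtain ⟨k, rfl⟩ := Nat.exists_eq_add_of_le hm
    rw [show N+1+k = (N+k)+1 by omega, Function.iterate_succ_apply, h1]
    exact hN (N+k) (by omega)
end

section
/- (Finite termination of Algorithm 1 on the scalar model problem, active case.) Let ε > 0, β > 0 and g > 0. Define Φ : ℝ → ℝ by Φ(x) = x − ( x + β·max(x−g, 0)/max(x−g, ε) ) / ( 1 + β·sgn(x−g)/max(x−g, ε) ), where sgn(s) = 1 if s ≥ 0 and sgn(s) = 0 if s < 0. Then for every initial point x⁰ ∈ ℝ and every k ≥ 2, the iterate x^k = Φ^[k](x⁰) equals 0. -/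
lemma phi_of_lt (ε g β x : ℝ) (h : x < g) : PhiMap ε g β x = 0 := by
  have h' : x - g < 0 := by linarith
  simp [PhiMap, sgn, max_eq_right h'.le, h'.not_ge, h.not_ge]

lemma phi_lt_g (ε g β : ℝ) (hε : 0 < ε) (hβ : 0 < β) (hg : 0 < g) (x : ℝ) :
    PhiMap ε g β x < g := by
  rcases lt_or_ge x g with h | h
  · rw [phi_of_lt ε g β x h]; exact hg
  · have h' : 0 ≤ x - g := by linarith
    set m := max (x - g) ε with hm
    have hmpos : 0 < m := lt_max_of_lt_right hε
    have hmax0 : max (x - g) 0 = x - g := max_eq_left h'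
    have hsgn : sgn (x - g) = 1 := if_pos h'
    have hkey : PhiMap ε g β x = β * g / (m + β) := by
      rw [PhiMap, hmax0, hsgn]
      field_simp
      ring
    rw [hkey]
    rw [div_lt_iff₀ (by linarith)]
    nlinarith

/-- Finite termination of Algorithm 1 on the scalar model problem (active case). -/
theorem stmt15 (ε g β : ℝ) (hε : 0 < ε) (hβ : 0 < β) (hg : 0 < g) :
    ∀ x0 : ℝ, ∀ k : ℕ, 2 ≤ k → (PhiMap ε g β)^[k] x0 = 0 := by
  intro x0 k hk
  obtain ⟨j, rfl⟩ : ∃ j, k = j + 2 := ⟨k - 2, by omega⟩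
  rw [Function.iterate_add_apply]
  have h2 : (PhiMap ε g β)^[2] x0 = 0 := by
    have := phi_lt_g ε g β hε hβ hg x0
    simp [Function.iterate_succ_apply', phi_of_lt ε g β _ this]
  rw [h2]
  exact Function.iterate_fixed (phi_of_lt ε g β 0 hg) j
end
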